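/- There exist a split digraph D=(V_1,V_2;A) and four distinct vertices s_1,t_1,s_2,t_2 of D such that κ_{D−{s_2,t_2}}(s_1,t_1)=3 and κ_{D−{s_1,t_1}}(s_2,t_2)=3, yet the tuple (D,s_1,t_1,s_2,t_2) is not good. -/

import Mathlib

/-- A digraph (given by its arc relation `A`) is loopless. -/
def IsLoopless {V : Type*} (A : V → V → Prop) : Prop :=
  ∀ v, ¬ A v v

/-- `l` is a directed path in the digraph with arc relation `A`, recorded as the
(nonempty, repetition-free) list of its vertices, consecutive ones joined by arcs. -/
def IsDipath {V : Type*} (A : V → V → Prop) (l : List V) : Prop :=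
  l ≠ [] ∧ l.Nodup ∧ l.Chain' A

/-- `l` is a directed `(s,t)`-path. -/
def IsDipathFrom {V : Type*} (A : V → V → Prop) (s t : V) (l : List V) : Prop :=
  IsDipath A l ∧ l.head? = some s ∧ l.getLast? = some t

/-- The digraph `A`, with the vertices of `F` deleted, contains `k` internally
disjoint `(s,t)`-paths. -/
def HasIDPaths {V : Type*} (A : V → V → Prop) (F : Set V) (s t : V) (k : ℕ) : Prop :=
  ∃ P : Fin k → List V,
    (∀ i, IsDipathFrom A s t (P i) ∧ ∀ v ∈ P i, v ∉ F) ∧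
    (∀ i j, i ≠ j → ∀ v, v ∈ P i → v ∈ P j → v = s ∨ v = t)

/-- The digraph `A` is `k`-linked. -/
def IsKLinked {V : Type*} (A : V → V → Prop) (k : ℕ) : Prop :=
  ∀ s t : Fin k → V,
    Function.Injective (Sum.elim s t : Fin k ⊕ Fin k → V) →
    ∃ P : Fin k → List V,
      (∀ i, IsDipathFrom A (s i) (t i) (P i)) ∧
      (∀ i j, i ≠ j → ∀ v, v ∈ P i → v ∉ P j)

/-- The digraph `A` is `k`-strong. -/
def IsKStrong {V : Type*} [Fintype V] (A : V → V → Prop) (k : ℕ) : Prop :=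
  k + 1 ≤ Fintype.card V ∧
  ∀ F : Finset V, F.card ≤ k - 1 →
    ∀ x y : V, x ∉ F → y ∉ F → x ≠ y →
      ∃ l : List V, IsDipathFrom A x y l ∧ ∀ v ∈ l, v ∉ F

/-- `(A, V1, V2)` is a split digraph: the vertex set is the disjoint union of the
nonempty sets `V1` and `V2`, there is no arc between two vertices of `V1`, and the
subdigraph induced by `V2` is semicomplete. -/
def IsSplitDigraph {V : Type*} (A : V → V → Prop) (V1 V2 : Set V) : Prop :=
  V1.Nonempty ∧ V2.Nonempty ∧ Disjoint V1 V2 ∧ V1 ∪ V2 = Set.univ ∧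
  (∀ u ∈ V1, ∀ v ∈ V1, ¬ A u v) ∧
  (∀ u ∈ V2, ∀ v ∈ V2, u ≠ v → A u v ∨ A v u)

/-- The tuple `(A, s1, t1, s2, t2)` is good: there are vertex-disjoint `(s1,t1)`-
and `(s2,t2)`-paths. -/
def IsGood {V : Type*} (A : V → V → Prop) (s1 t1 s2 t2 : V) : Prop :=
  ∃ P1 P2 : List V, IsDipathFrom A s1 t1 P1 ∧ IsDipathFrom A s2 t2 P2 ∧
    ∀ v ∈ P1, v ∉ P2

-- ===================== auxiliary construction =====================

/-- Out-neighbourhood bitmasks of the 13-vertex counterexample digraph.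
Vertices 0–8 form a 3×3 pattern of "crossing" vertices, 9 = s1, 10 = t1,
11 = s2, 12 = t2. -/
def adjMask : ℕ → ℕ
  | 0 => 4104 | 1 => 1028 | 2 => 2601 | 3 => 2768 | 4 => 4224 | 5 => 1032
  | 6 => 1152 | 7 => 2822 | 8 => 4100 | 9 => 273 | 10 => 6796 | 11 => 610
  | 12 => 2700 | _ => 0

/-- The arc relation of the counterexample digraph. -/
def Av (u v : Fin 13) : Prop := (adjMask u.val).testBit v.val = true

instance : DecidableRel Av := fun _ v => inferInstanceAs (Decidable (_ = true))

def nbrM (r : ℕ) : ℕ :=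
  (List.range 13).foldr (fun u acc => if r.testBit u then adjMask u ||| acc else acc) 0

def stepM (T r : ℕ) : ℕ := r ||| (nbrM r &&& T)

def SubM (m m' : ℕ) : Prop := ∀ v, m.testBit v = true → m'.testBit v = true

def chk (m : ℕ) : Bool :=
  !(((stepM (m ||| 1024))^[13] (2 ^ 9)).testBit 10) ||
  !(((stepM ((511 ^^^ m) ||| 4096))^[13] (2 ^ 11)).testBit 12)

def allOK : ℕ → Bool
  | 0 => true
  | m + 1 => chk m && allOK m

set_option maxRecDepth 100000 in
set_option maxHeartbeats 2000000 in
theorem check_allOK : allOK 512 = true := rfl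

lemma allOK_spec : ∀ n, allOK n = true → ∀ m, m < n → chk m = true := by
  intro n
  induction n with
  | zero => intro _ m hm; omega
  | succ k ih =>
    intro h m hm
    rw [allOK, Bool.and_eq_true] at h
    rcases Nat.lt_succ_iff_lt_or_eq.mp hm with h' | rfl
    · exact ih h.2 m h'
    · exact h.1

lemma testBit_nbrM {r v : ℕ} :
    (nbrM r).testBit v = true ↔ ∃ u, u < 13 ∧ r.testBit u = true ∧ (adjMask u).testBit v = true := by
  have aux : ∀ (l : List ℕ) (acc : ℕ),
      ((l.foldr (fun u a => if r.testBit u then adjMask u ||| a else a) acc).testBit v = true) ↔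
      ((∃ u ∈ l, r.testBit u = true ∧ (adjMask u).testBit v = true) ∨ acc.testBit v = true) := by
    intro l
    induction l with
    | nil => simp
    | cons b l ih =>
      intro acc
      simp only [List.foldr_cons]
      by_cases hb : r.testBit b = true
      · simp only [if_pos hb, Nat.testBit_or, Bool.or_eq_true, ih, List.mem_cons]
        constructor
        · rintro (h | ⟨u, hu, h1, h2⟩ | h)
          · exact Or.inl ⟨b, Or.inl rfl, hb, h⟩
          · exact Or.inl ⟨u, Or.inr hu, h1, h2⟩
          · exact Or.inr h
        · rintro (⟨u, (rfl | hu), h1, h2⟩ | h)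
          · exact Or.inl h2
          · exact Or.inr (Or.inl ⟨u, hu, h1, h2⟩)
          · exact Or.inr (Or.inr h)
      · simp only [if_neg hb, ih, List.mem_cons]
        constructor
        · rintro (⟨u, hu, h1, h2⟩ | h)
          · exact Or.inl ⟨u, Or.inr hu, h1, h2⟩
          · exact Or.inr h
        · rintro (⟨u, (rfl | hu), h1, h2⟩ | h)
          · exact absurd h1 hb
          · exact Or.inl ⟨u, hu, h1, h2⟩
          · exact Or.inr h
  unfold nbrM
  rw [aux]
  simp [List.mem_range]

lemma stepM_char {T r v : ℕ} :
    (stepM T r).testBit v = true ↔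
    r.testBit v = true ∨
      ((∃ u, u < 13 ∧ r.testBit u = true ∧ (adjMask u).testBit v = true) ∧ T.testBit v = true) := by
  unfold stepM
  rw [Nat.testBit_or, Nat.testBit_and, Bool.or_eq_true, Bool.and_eq_true, testBit_nbrM]

lemma sub_stepM {T r : ℕ} : SubM r (stepM T r) := fun v h => stepM_char.mpr (Or.inl h)

lemma stepM_mono_r {T r r' : ℕ} (h : SubM r r') : SubM (stepM T r) (stepM T r') := by
  intro v hv
  rcases stepM_char.mp hv with h1 | ⟨⟨u, hu1, hu2, hu3⟩, hT⟩
  · exact stepM_char.mpr (Or.inl (h v h1))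
  · exact stepM_char.mpr (Or.inr ⟨⟨u, hu1, h u hu2, hu3⟩, hT⟩)

lemma stepM_mono_T {T T' r : ℕ} (h : SubM T T') : SubM (stepM T r) (stepM T' r) := by
  intro v hv
  rcases stepM_char.mp hv with h1 | ⟨he, hT⟩
  · exact stepM_char.mpr (Or.inl h1)
  · exact stepM_char.mpr (Or.inr ⟨he, h v hT⟩)

lemma iterM_mono_r {T : ℕ} (k : ℕ) {r r' : ℕ} (h : SubM r r') :
    SubM ((stepM T)^[k] r) ((stepM T)^[k] r') := by
  induction k generalizing r r' with
  | zero => simpa using h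
  | succ k ih =>
    rw [Function.iterate_succ_apply, Function.iterate_succ_apply]
    exact ih (stepM_mono_r h)

lemma iterM_mono_T {T T' : ℕ} (k : ℕ) (h : SubM T T') {r : ℕ} :
    SubM ((stepM T)^[k] r) ((stepM T')^[k] r) := by
  induction k generalizing r with
  | zero => exact fun v hv => hv
  | succ k ih =>
    rw [Function.iterate_succ_apply, Function.iterate_succ_apply]
    intro v hv
    exact ih v (iterM_mono_r k (stepM_mono_T h) v hv)

lemma iterM_mono_k {T : ℕ} {j k : ℕ} (h : j ≤ k) {r : ℕ} :
    SubM ((stepM T)^[j] r) ((stepM T)^[k] r) := by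
  obtain ⟨d, rfl⟩ := Nat.exists_eq_add_of_le h
  clear h
  induction d with
  | zero => exact fun v hv => hv
  | succ d ih =>
    intro v hv
    have h2 := ih v hv
    rw [← Nat.add_assoc, Function.iterate_succ_apply']
    exact sub_stepM v h2

lemma chain_reachM {T : ℕ} :
    ∀ (l : List (Fin 13)) (s t : Fin 13), l.Chain' Av → l.head? = some s →
      l.getLast? = some t → (∀ v ∈ l.tail, T.testBit v.val = true) →
      ((stepM T)^[l.length] (2 ^ s.val)).testBit t.val = true := by
  intro l
  induction l with
  | nil => intro s t _ hh; simp at hh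
  | cons a l ih =>
    intro s t hch hh hl hT
    rw [List.head?_cons, Option.some.injEq] at hh
    subst hh
    cases l with
    | nil =>
      simp only [List.getLast?_singleton, Option.some.injEq] at hl
      subst hl
      exact sub_stepM _ Nat.testBit_two_pow_self
    | cons b l' =>
      replace hch := List.isChain_cons_cons.mp hch
      have hbT : T.testBit b.val = true := hT b (by simp)
      have hT' : ∀ v ∈ (b :: l').tail, T.testBit v.val = true := by
        intro v hv
        exact hT v (List.mem_cons_of_mem _ hv)
      rw [List.getLast?_cons_cons] at hl
      have h1 := ih b t hch.2 rfl hl hT'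
      have hsub : SubM (2 ^ b.val) (stepM T (2 ^ a.val)) := by
        intro v hv
        have hvb : v = b.val := by
          by_contra hne
          rw [Nat.testBit_two_pow_of_ne (fun h => hne h.symm)] at hv
          exact Bool.false_ne_true hv
        subst hvb
        exact stepM_char.mpr (Or.inr ⟨⟨a.val, a.isLt, Nat.testBit_two_pow_self, hch.1⟩, hbT⟩)
      have h2 := iterM_mono_r (b :: l').length hsub t.val h1
      rw [← Function.iterate_succ_apply] at h2
      exact h2

def maskOf (l : List (Fin 13)) : ℕ := l.foldr (fun w acc => 2 ^ w.val ||| acc) 0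

lemma testBit_maskOf {l : List (Fin 13)} {v : ℕ} :
    (maskOf l).testBit v = true ↔ ∃ w ∈ l, w.val = v := by
  induction l with
  | nil => simp [maskOf]
  | cons b l ih =>
    unfold maskOf at *
    simp only [List.foldr_cons, Nat.testBit_or, Bool.or_eq_true, ih, List.mem_cons]
    constructor
    · rintro (hb | ⟨w, hw, rfl⟩)
      · have hv : v = b.val := by
          by_contra hne
          rw [Nat.testBit_two_pow_of_ne (fun h => hne h.symm)] at hb
          exact Bool.false_ne_true hb
        exact ⟨b, Or.inl rfl, hv.symm⟩
      · exact ⟨w, Or.inr hw, rfl⟩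
    · rintro ⟨w, hw | hw, rfl⟩
      · subst hw; exact Or.inl Nat.testBit_two_pow_self
      · exact Or.inr ⟨w, hw, rfl⟩

lemma mem_of_head?' {α : Type*} {l : List α} {a : α} (h : l.head? = some a) : a ∈ l := by
  cases l with
  | nil => simp at h
  | cons b l =>
    rw [List.head?_cons, Option.some.injEq] at h
    subst h; exact List.mem_cons_self

lemma mem_of_getLast?' {α : Type*} {l : List α} {a : α} (h : l.getLast? = some a) : a ∈ l := by
  induction l with
  | nil => simp at h
  | cons b l ih =>
    cases l with
    | nil =>
      simp only [List.getLast?_singleton, Option.some.injEq] at h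
      subst h; exact List.mem_cons_self
    | cons c l' =>
      rw [List.getLast?_cons_cons] at h
      exact List.mem_cons_of_mem _ (ih h)

lemma second_of_dipath {A : Fin 13 → Fin 13 → Prop} {s t : Fin 13} {l : List (Fin 13)}
    (h : IsDipathFrom A s t l) (hst : s ≠ t) : ∃ v l', l = s :: v :: l' ∧ A s v := by
  obtain ⟨⟨hne, _, hch⟩, hh, hl⟩ := h
  cases l with
  | nil => exact absurd rfl hne
  | cons a l =>
    rw [List.head?_cons, Option.some.injEq] at hh
    subst hh
    cases l with
    | nil =>
      simp only [List.getLast?_singleton, Option.some.injEq] at hl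
      exact absurd hl hst
    | cons b l' =>
      replace hch := List.isChain_cons_cons.mp hch
      exact ⟨b, l', rfl, hch.1⟩

def V1S : Set (Fin 13) :=
  {v | v.val = 0 ∨ v.val = 1 ∨ v.val = 4 ∨ v.val = 5 ∨ v.val = 6 ∨ v.val = 8}

def V2S : Set (Fin 13) :=
  {v | v.val = 2 ∨ v.val = 3 ∨ v.val = 7 ∨ v.val = 9 ∨ v.val = 10 ∨ v.val = 11 ∨ v.val = 12}


lemma chain5 {a b c d e : Fin 13} (h1 : Av a b) (h2 : Av b c) (h3 : Av c d)
    (h4 : Av d e) : List.Chain' Av [a, b, c, d, e] :=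
  List.isChain_cons_cons.mpr ⟨h1, List.isChain_cons_cons.mpr ⟨h2, List.isChain_cons_cons.mpr ⟨h3,
    List.isChain_cons_cons.mpr ⟨h4, List.isChain_singleton e⟩⟩⟩⟩

lemma no_four (F : Set (Fin 13)) (s t : Fin 13) (N : Finset (Fin 13)) (hN : N.card = 3)
    (hst : s ≠ t) (hsN : s ∉ N) (htN : t ∉ N)
    (hsec : ∀ x : Fin 13, Av s x → x ∉ F → x ∈ N) :
    ¬ HasIDPaths Av F s t 4 := by
  rintro ⟨P, h1, h2⟩
  have hsec' : ∀ i : Fin 4, ∃ v l', P i = s :: v :: l' ∧ Av s v :=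
    fun i => second_of_dipath (h1 i).1 hst
  choose v l hPl hAv using hsec'
  have hvmem : ∀ i, v i ∈ P i := by
    intro i
    rw [hPl i]
    exact List.mem_cons_of_mem _ (List.mem_cons_self)
  have hvN : ∀ i, v i ∈ N := fun i => hsec (v i) (hAv i) ((h1 i).2 _ (hvmem i))
  have hinj : Set.InjOn v ↑(Finset.univ : Finset (Fin 4)) := by
    intro i _ j _ heq
    by_contra hne
    have hvj : v i ∈ P j := by rw [heq]; exact hvmem j
    rcases h2 i j hne (v i) (hvmem i) hvj with h | h
    · exact hsN (h ▸ hvN i)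
    · exact htN (h ▸ hvN i)
  have hcard := Finset.card_le_card_of_injOn v (fun i _ => hvN i) hinj
  rw [hN, Finset.card_univ, Fintype.card_fin] at hcard
  omega


/-- There is a split digraph D with distinct vertices s1,t1,s2,t2 such that
κ_{D−{s2,t2}}(s1,t1) = 3 and κ_{D−{s1,t1}}(s2,t2) = 3, but the tuple
(D,s1,t1,s2,t2) is not good. -/
theorem stmt_5 :
    ∃ (n : ℕ) (A : Fin n → Fin n → Prop) (V1 V2 : Set (Fin n))
      (s1 t1 s2 t2 : Fin n),
      IsLoopless A ∧ IsSplitDigraph A V1 V2 ∧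
      ([s1, t1, s2, t2] : List (Fin n)).Nodup ∧
      HasIDPaths A {s2, t2} s1 t1 3 ∧ ¬ HasIDPaths A {s2, t2} s1 t1 4 ∧
      HasIDPaths A {s1, t1} s2 t2 3 ∧ ¬ HasIDPaths A {s1, t1} s2 t2 4 ∧
      ¬ IsGood A s1 t1 s2 t2 := by
  refine ⟨13, Av, V1S, V2S, 9, 10, 11, 12, ?_, ?_, ?_, ?_, ?_, ?_, ?_, ?_⟩
  -- loopless
  · show ∀ v : Fin 13, ¬ Av v v
    decide
  -- split digraph
  · refine ⟨⟨0, Or.inl rfl⟩, ⟨2, Or.inl rfl⟩, ?_, ?_, ?_, ?_⟩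
    · rw [Set.disjoint_left]
      intro a ha hb
      simp only [V1S, V2S, Set.mem_setOf_eq] at ha hb
      omega
    · rw [Set.eq_univ_iff_forall]
      intro x
      have hx := x.isLt
      simp only [V1S, V2S, Set.mem_union, Set.mem_setOf_eq]
      omega
    · have H : ∀ u v : Fin 13,
          (u.val = 0 ∨ u.val = 1 ∨ u.val = 4 ∨ u.val = 5 ∨ u.val = 6 ∨ u.val = 8) →
          (v.val = 0 ∨ v.val = 1 ∨ v.val = 4 ∨ v.val = 5 ∨ v.val = 6 ∨ v.val = 8) →
          ¬ Av u v := by decide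
      exact fun u hu v hv => H u v hu hv
    · have H : ∀ u v : Fin 13,
          (u.val = 2 ∨ u.val = 3 ∨ u.val = 7 ∨ u.val = 9 ∨ u.val = 10 ∨ u.val = 11 ∨ u.val = 12) →
          (v.val = 2 ∨ v.val = 3 ∨ v.val = 7 ∨ v.val = 9 ∨ v.val = 10 ∨ v.val = 11 ∨ v.val = 12) →
          u ≠ v → Av u v ∨ Av v u := by decide
      exact fun u hu v hv => H u v hu hv
  -- nodup
  · decide
  -- 3 internally disjoint (s1,t1)-paths avoiding {s2,t2}
  · refine ⟨![[9,0,3,6,10],[9,4,7,1,10],[9,8,2,5,10]], ?_, ?_⟩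
    · intro i
      constructor
      · fin_cases i <;>
          exact ⟨⟨by decide, by decide,
            chain5 (by decide) (by decide) (by decide) (by decide)⟩, by decide, by decide⟩
      · intro w hw hmem
        rcases Set.mem_insert_iff.mp hmem with rfl | hmem'
        · revert hw; fin_cases i <;> decide
        · rw [Set.mem_singleton_iff] at hmem'
          subst hmem'
          revert hw; fin_cases i <;> decide
    · decide
  -- no 4 such paths
  · refine no_four _ _ _ ({0, 4, 8} : Finset (Fin 13)) (by decide) (by decide)
      (by decide) (by decide) ?_
    intro x hx _
    have : ∀ x : Fin 13, Av 9 x → x ∈ ({0, 4, 8} : Finset (Fin 13)) := by decide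
    exact this x hx
  -- 3 internally disjoint (s2,t2)-paths avoiding {s1,t1}
  · refine ⟨![[11,1,2,0,12],[11,5,3,4,12],[11,6,7,8,12]], ?_, ?_⟩
    · intro i
      constructor
      · fin_cases i <;>
          exact ⟨⟨by decide, by decide,
            chain5 (by decide) (by decide) (by decide) (by decide)⟩, by decide, by decide⟩
      · intro w hw hmem
        rcases Set.mem_insert_iff.mp hmem with rfl | hmem'
        · revert hw; fin_cases i <;> decide
        · rw [Set.mem_singleton_iff] at hmem'
          subst hmem'
          revert hw; fin_cases i <;> decide
    · decide
  -- no 4 such paths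
  · refine no_four _ _ _ ({1, 5, 6} : Finset (Fin 13)) (by decide) (by decide)
      (by decide) (by decide) ?_
    intro x hx hxF
    have hx9 : x ≠ 9 := by
      intro h
      exact hxF (h ▸ Set.mem_insert _ _)
    have : ∀ x : Fin 13, Av 11 x → x ≠ 9 → x ∈ ({1, 5, 6} : Finset (Fin 13)) := by decide
    exact this x hx hx9
  -- not good
  · rintro ⟨P1, P2, hP1, hP2, hdisj⟩
    obtain ⟨⟨hne1, hnd1, hch1⟩, hh1, hl1⟩ := hP1
    obtain ⟨⟨hne2, hnd2, hch2⟩, hh2, hl2⟩ := hP2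
    have h11 : (11 : Fin 13) ∈ P2 := mem_of_head?' hh2
    have h12 : (12 : Fin 13) ∈ P2 := mem_of_getLast?' hl2
    obtain ⟨tl1, rfl⟩ : ∃ tl, P1 = 9 :: tl := by
      cases P1 with
      | nil => simp at hh1
      | cons a l =>
        rw [List.head?_cons, Option.some.injEq] at hh1
        exact ⟨l, by rw [hh1]⟩
    obtain ⟨tl2, rfl⟩ : ∃ tl, P2 = 11 :: tl := by
      cases P2 with
      | nil => simp at hh2
      | cons a l =>
        rw [List.head?_cons, Option.some.injEq] at hh2
        exact ⟨l, by rw [hh2]⟩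
    have h9tl : (9 : Fin 13) ∉ tl1 := (List.nodup_cons.mp hnd1).1
    have h11tl : (11 : Fin 13) ∉ tl2 := (List.nodup_cons.mp hnd2).1
    set m : ℕ := maskOf tl1 &&& 511 with hm
    have h511 : ∀ x : ℕ, x < 9 → (511 : ℕ).testBit x = true := by
      intro x hx
      have h5 : (511 : ℕ) = 2 ^ 9 - 1 := by norm_num
      rw [h5, Nat.testBit_two_pow_sub_one]
      simpa using hx
    have hT1 : ∀ w ∈ (9 :: tl1 : List (Fin 13)).tail, (m ||| 1024).testBit w.val = true := by
      intro w hw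
      have hwP1 : w ∈ (9 :: tl1 : List (Fin 13)) := List.mem_cons_of_mem _ hw
      have hw11 : w ≠ 11 := fun h => hdisj w hwP1 (h ▸ h11)
      have hw12 : w ≠ 12 := fun h => hdisj w hwP1 (h ▸ h12)
      have hw9 : w ≠ 9 := fun h => h9tl (h ▸ hw)
      rw [Nat.testBit_or, Bool.or_eq_true]
      by_cases h10w : w = 10
      · right
        subst h10w
        decide
      · left
        have hwlt : w.val < 9 := by
          have h13 := w.isLt
          have e9 : w.val ≠ 9 := fun h => hw9 (Fin.ext h)
          have e10 : w.val ≠ 10 := fun h => h10w (Fin.ext h)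
          have e11 : w.val ≠ 11 := fun h => hw11 (Fin.ext h)
          have e12 : w.val ≠ 12 := fun h => hw12 (Fin.ext h)
          omega
        rw [hm, Nat.testBit_and, Bool.and_eq_true]
        exact ⟨testBit_maskOf.mpr ⟨w, hw, rfl⟩, h511 _ hwlt⟩
    have hlen1 : (9 :: tl1 : List (Fin 13)).length ≤ 13 := by
      have := List.Nodup.length_le_card hnd1
      simpa using this
    have hr1 : ((stepM (m ||| 1024))^[13] (2 ^ 9)).testBit 10 = true := by
      have h0 := chain_reachM (9 :: tl1) 9 10 hch1 rfl hl1 hT1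
      exact iterM_mono_k hlen1 _ h0
    -- side 2
    set m2 : ℕ := maskOf tl2 &&& 511 with hm2
    have hT2 : ∀ w ∈ (11 :: tl2 : List (Fin 13)).tail, (m2 ||| 4096).testBit w.val = true := by
      intro w hw
      have hwP2 : w ∈ (11 :: tl2 : List (Fin 13)) := List.mem_cons_of_mem _ hw
      have hw9 : w ≠ 9 := fun h => hdisj 9 (List.mem_cons_self) (h ▸ hwP2)
      have hw10 : w ≠ 10 := by
        intro h
        exact hdisj 10 (mem_of_getLast?' hl1) (h ▸ hwP2)
      have hw11 : w ≠ 11 := fun h => h11tl (h ▸ hw)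
      rw [Nat.testBit_or, Bool.or_eq_true]
      by_cases h12w : w = 12
      · right
        subst h12w
        decide
      · left
        have hwlt : w.val < 9 := by
          have h13 := w.isLt
          have e9 : w.val ≠ 9 := fun h => hw9 (Fin.ext h)
          have e10 : w.val ≠ 10 := fun h => hw10 (Fin.ext h)
          have e11 : w.val ≠ 11 := fun h => hw11 (Fin.ext h)
          have e12 : w.val ≠ 12 := fun h => h12w (Fin.ext h)
          omega
        rw [hm2, Nat.testBit_and, Bool.and_eq_true]
        exact ⟨testBit_maskOf.mpr ⟨w, hw, rfl⟩, h511 _ hwlt⟩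
    have hlen2 : (11 :: tl2 : List (Fin 13)).length ≤ 13 := by
      have := List.Nodup.length_le_card hnd2
      simpa using this
    have hsub2 : SubM (m2 ||| 4096) ((511 ^^^ m) ||| 4096) := by
      intro x hx
      rw [Nat.testBit_or, Bool.or_eq_true] at hx ⊢
      rcases hx with hx | hx
      · left
        rw [hm2, Nat.testBit_and, Bool.and_eq_true] at hx
        obtain ⟨hmask, h511x⟩ := hx
        obtain ⟨w, hw, rfl⟩ := testBit_maskOf.mp hmask
        have hmfalse : m.testBit w.val = false := by
          rw [hm, Nat.testBit_and]
          cases hmb : (maskOf tl1).testBit w.val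
          · simp
          · exfalso
            obtain ⟨w1, hw1, hval⟩ := testBit_maskOf.mp hmb
            have : w1 = w := Fin.ext hval
            subst this
            exact hdisj w1 (List.mem_cons_of_mem _ hw1) (List.mem_cons_of_mem _ hw)
        rw [Nat.testBit_xor, hmfalse, h511x]
        rfl
      · right; exact hx
    have hr2 : ((stepM ((511 ^^^ m) ||| 4096))^[13] (2 ^ 11)).testBit 12 = true := by
      have h0 := chain_reachM (11 :: tl2) 11 12 hch2 rfl hl2 hT2
      have h1 := iterM_mono_k hlen2 _ h0
      exact iterM_mono_T 13 hsub2 _ h1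
    have hmlt : m < 512 := Nat.lt_succ_of_le Nat.and_le_right
    have hchk : chk m = true := allOK_spec 512 check_allOK m hmlt
    rw [chk, Bool.or_eq_true, Bool.not_eq_true', Bool.not_eq_true'] at hchk
    rcases hchk with h | h
    · rw [hr1] at h; simp at h
    · rw [hr2] at h; simp at h
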